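/- For 0 < α < 1, the function f₁(x) = (x−1)((x+1)² + 1)^α + 2((x+1)² + 4)^α − (x−1)(x² + 1)^α − (x² + 4)^α is strictly increasing on [1, ∞). -/

import Mathlib

open Real

/-- Tangent-line (Bernoulli) inequality for concave rpow. -/
lemma bern_aux {α A B : ℝ} (hα0 : 0 ≤ α) (hα1 : α ≤ 1) (hB : 0 < B) (hBA : B < A) :
    B ^ α ≤ A ^ α + α * (A ^ α / A) * (B - A) := by
  have hA : 0 < A := hB.trans hBA
  have hs : (-1 : ℝ) ≤ B / A - 1 := by
    have : 0 < B / A := div_pos hB hA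
    linarith
  have h := rpow_one_add_le_one_add_mul_self hs hα0 hα1
  have h1 : (1 : ℝ) + (B / A - 1) = B / A := by ring
  rw [h1, Real.div_rpow hB.le hA.le] at h
  have haA : 0 < A ^ α := Real.rpow_pos_of_pos hA α
  rw [div_le_iff₀ haA] at h
  have h2 : (1 + α * (B / A - 1)) * A ^ α = A ^ α + α * (A ^ α / A) * (B - A) := by
    field_simp
  linarith [h2 ▸ h]

lemma key2_aux {x a b : ℝ} (hx : 1 < x) (hb : 0 < b) (hba : b ≤ a) :
    b * (2 * x ^ 2 - 2 * x) * ((x + 1) ^ 2 + 1) ≤ a * (2 * x ^ 2 + 2 * x - 1) * (x ^ 2 + 1) := by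
  have p1 : (2 * x ^ 2 - 2 * x) * ((x + 1) ^ 2 + 1) ≤ (2 * x ^ 2 + 2 * x - 1) * (x ^ 2 + 1) := by
    nlinarith
  have q1 : 0 ≤ 2 * x ^ 2 - 2 * x := by nlinarith
  have p2 : 0 ≤ (2 * x ^ 2 - 2 * x) * ((x + 1) ^ 2 + 1) :=
    mul_nonneg q1 (by positivity)
  calc b * (2 * x ^ 2 - 2 * x) * ((x + 1) ^ 2 + 1)
      = b * ((2 * x ^ 2 - 2 * x) * ((x + 1) ^ 2 + 1)) := by ring
    _ ≤ a * ((2 * x ^ 2 - 2 * x) * ((x + 1) ^ 2 + 1)) :=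
        mul_le_mul_of_nonneg_right hba p2
    _ ≤ a * ((2 * x ^ 2 + 2 * x - 1) * (x ^ 2 + 1)) :=
        mul_le_mul_of_nonneg_left p1 (hb.trans_le hba).le
    _ = a * (2 * x ^ 2 + 2 * x - 1) * (x ^ 2 + 1) := by ring

lemma key3_aux {x c d : ℝ} (hx : 1 < x) (hd : 0 < d) (hdc : d < c) :
    d * x * ((x + 1) ^ 2 + 4) < c * (2 * (x + 1)) * (x ^ 2 + 4) := by
  have p1 : x * ((x + 1) ^ 2 + 4) < 2 * (x + 1) * (x ^ 2 + 4) := by nlinarith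
  have p2 : 0 < x * ((x + 1) ^ 2 + 4) := by nlinarith
  calc d * x * ((x + 1) ^ 2 + 4)
      = d * (x * ((x + 1) ^ 2 + 4)) := by ring
    _ < c * (x * ((x + 1) ^ 2 + 4)) := mul_lt_mul_of_pos_right hdc p2
    _ < c * (2 * (x + 1) * (x ^ 2 + 4)) := by
        exact mul_lt_mul_of_pos_left p1 (hd.trans hdc)
    _ = c * (2 * (x + 1)) * (x ^ 2 + 4) := by ring

lemma main_ineq {x α a b u v w z : ℝ} (hx : 1 < x) (hα : 0 < α)
    (k1 : α * u * (2 * x + 1) ≤ a - b)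
    (k2 : v * (2 * x ^ 2 - 2 * x) ≤ u * (2 * x ^ 2 + 2 * x - 1))
    (k3 : x * z < 2 * (x + 1) * w) :
    0 < 1 * a + (x - 1) * (α * u * (2 * (x + 1))) + 2 * (α * w * (2 * (x + 1)))
        - (1 * b + (x - 1) * (α * v * (2 * x))) - α * z * (2 * x) := by
  have h2 : 0 ≤ α * (u * (2 * x ^ 2 + 2 * x - 1) - v * (2 * x ^ 2 - 2 * x)) :=
    mul_nonneg hα.le (by linarith)
  have h3 : 0 < α * (2 * (x + 1) * w - x * z) := mul_pos hα (by linarith)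
  nlinarith [k1, h2, h3]

theorem stmt_12 (α : ℝ) (hα0 : 0 < α) (hα1 : α < 1) :
    StrictMonoOn (fun x : ℝ =>
      (x - 1) * ((x + 1) ^ 2 + 1) ^ α + 2 * ((x + 1) ^ 2 + 4) ^ α
        - (x - 1) * (x ^ 2 + 1) ^ α - (x ^ 2 + 4) ^ α) (Set.Ici 1) := by
  apply strictMonoOn_of_deriv_pos (convex_Ici 1)
  · apply Continuous.continuousOn
    have c1 : Continuous fun x : ℝ => ((x + 1) ^ 2 + 1) ^ α :=
      Continuous.rpow_const (by continuity) (fun x => Or.inr hα0.le)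
    have c2 : Continuous fun x : ℝ => ((x + 1) ^ 2 + 4) ^ α :=
      Continuous.rpow_const (by continuity) (fun x => Or.inr hα0.le)
    have c3 : Continuous fun x : ℝ => (x ^ 2 + 1) ^ α :=
      Continuous.rpow_const (by continuity) (fun x => Or.inr hα0.le)
    have c4 : Continuous fun x : ℝ => (x ^ 2 + 4) ^ α :=
      Continuous.rpow_const (by continuity) (fun x => Or.inr hα0.le)
    exact ((((continuous_id.sub continuous_const).mul c1).add
      (continuous_const.mul c2)).sub ((continuous_id.sub continuous_const).mul c3)).sub c4
  · intro x hx
    rw [interior_Ici] at hx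
    have hx1 : (1 : ℝ) < x := hx
    have hA : (0 : ℝ) < (x + 1) ^ 2 + 1 := by positivity
    have hB : (0 : ℝ) < x ^ 2 + 1 := by positivity
    have hC : (0 : ℝ) < (x + 1) ^ 2 + 4 := by positivity
    have hD : (0 : ℝ) < x ^ 2 + 4 := by positivity
    -- derivatives of inner polynomials
    have dA : HasDerivAt (fun y : ℝ => (y + 1) ^ 2 + 1) (2 * (x + 1)) x := by
      have h := (((hasDerivAt_id x).add_const 1).pow 2).add_const (1 : ℝ)
      simpa using h
    have dC : HasDerivAt (fun y : ℝ => (y + 1) ^ 2 + 4) (2 * (x + 1)) x := by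
      have h := (((hasDerivAt_id x).add_const 1).pow 2).add_const (4 : ℝ)
      simpa using h
    have dB : HasDerivAt (fun y : ℝ => y ^ 2 + 1) (2 * x) x := by
      have h := ((hasDerivAt_id x).pow 2).add_const (1 : ℝ)
      simpa using h
    have dD : HasDerivAt (fun y : ℝ => y ^ 2 + 4) (2 * x) x := by
      have h := ((hasDerivAt_id x).pow 2).add_const (4 : ℝ)
      simpa using h
    have dAα : HasDerivAt (fun y : ℝ => ((y + 1) ^ 2 + 1) ^ α)
        (α * ((x + 1) ^ 2 + 1) ^ (α - 1) * (2 * (x + 1))) x :=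
      by have := (Real.hasDerivAt_rpow_const (p := α) (Or.inl hA.ne')).comp x dA; exact this
    have dCα : HasDerivAt (fun y : ℝ => ((y + 1) ^ 2 + 4) ^ α)
        (α * ((x + 1) ^ 2 + 4) ^ (α - 1) * (2 * (x + 1))) x :=
      by have := (Real.hasDerivAt_rpow_const (p := α) (Or.inl hC.ne')).comp x dC; exact this
    have dBα : HasDerivAt (fun y : ℝ => (y ^ 2 + 1) ^ α)
        (α * (x ^ 2 + 1) ^ (α - 1) * (2 * x)) x :=
      by have := (Real.hasDerivAt_rpow_const (p := α) (Or.inl hB.ne')).comp x dB; exact this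
    have dDα : HasDerivAt (fun y : ℝ => (y ^ 2 + 4) ^ α)
        (α * (x ^ 2 + 4) ^ (α - 1) * (2 * x)) x :=
      by have := (Real.hasDerivAt_rpow_const (p := α) (Or.inl hD.ne')).comp x dD; exact this
    have dx1 : HasDerivAt (fun y : ℝ => y - 1) 1 x := (hasDerivAt_id x).sub_const 1
    have hf : HasDerivAt (fun x : ℝ =>
        (x - 1) * ((x + 1) ^ 2 + 1) ^ α + 2 * ((x + 1) ^ 2 + 4) ^ α
          - (x - 1) * (x ^ 2 + 1) ^ α - (x ^ 2 + 4) ^ α)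
        ((1 * ((x + 1) ^ 2 + 1) ^ α
            + (x - 1) * (α * ((x + 1) ^ 2 + 1) ^ (α - 1) * (2 * (x + 1)))
          + 2 * (α * ((x + 1) ^ 2 + 4) ^ (α - 1) * (2 * (x + 1)))
          - (1 * (x ^ 2 + 1) ^ α + (x - 1) * (α * (x ^ 2 + 1) ^ (α - 1) * (2 * x))))
          - α * (x ^ 2 + 4) ^ (α - 1) * (2 * x)) x :=
      (((dx1.mul dAα).add (dCα.const_mul 2)).sub (dx1.mul dBα)).sub dDα
    rw [hf.deriv]
    -- rewrite the (α-1)-powers as quotients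
    have eA : ((x + 1) ^ 2 + 1) ^ (α - 1) = ((x + 1) ^ 2 + 1) ^ α / ((x + 1) ^ 2 + 1) := by
      rw [Real.rpow_sub hA, Real.rpow_one]
    have eB : (x ^ 2 + 1) ^ (α - 1) = (x ^ 2 + 1) ^ α / (x ^ 2 + 1) := by
      rw [Real.rpow_sub hB, Real.rpow_one]
    have eC : ((x + 1) ^ 2 + 4) ^ (α - 1) = ((x + 1) ^ 2 + 4) ^ α / ((x + 1) ^ 2 + 4) := by
      rw [Real.rpow_sub hC, Real.rpow_one]
    have eD : (x ^ 2 + 4) ^ (α - 1) = (x ^ 2 + 4) ^ α / (x ^ 2 + 4) := by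
      rw [Real.rpow_sub hD, Real.rpow_one]
    rw [eA, eB, eC, eD]
    have hbern := bern_aux (A := (x + 1) ^ 2 + 1) (B := x ^ 2 + 1) hα0.le hα1.le hB
      (by nlinarith)
    have key1 : α * (((x + 1) ^ 2 + 1) ^ α / ((x + 1) ^ 2 + 1)) * (2 * x + 1)
        ≤ ((x + 1) ^ 2 + 1) ^ α - (x ^ 2 + 1) ^ α := by nlinarith [hbern]
    have hapos : 0 < ((x + 1) ^ 2 + 1) ^ α := Real.rpow_pos_of_pos hA α
    have hbpos : 0 < (x ^ 2 + 1) ^ α := Real.rpow_pos_of_pos hB α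
    have hcpos : 0 < ((x + 1) ^ 2 + 4) ^ α := Real.rpow_pos_of_pos hC α
    have hdpos : 0 < (x ^ 2 + 4) ^ α := Real.rpow_pos_of_pos hD α
    have hba : (x ^ 2 + 1) ^ α < ((x + 1) ^ 2 + 1) ^ α :=
      Real.rpow_lt_rpow hB.le (by nlinarith) hα0
    have hdc : (x ^ 2 + 4) ^ α < ((x + 1) ^ 2 + 4) ^ α :=
      Real.rpow_lt_rpow hD.le (by nlinarith) hα0
    have key2 : ((x ^ 2 + 1) ^ α / (x ^ 2 + 1)) * (2 * x ^ 2 - 2 * x)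
        ≤ (((x + 1) ^ 2 + 1) ^ α / ((x + 1) ^ 2 + 1)) * (2 * x ^ 2 + 2 * x - 1) := by
      rw [div_mul_eq_mul_div, div_mul_eq_mul_div, div_le_div_iff₀ hB hA]
      exact key2_aux hx1 hbpos hba.le
    have key3 : x * ((x ^ 2 + 4) ^ α / (x ^ 2 + 4))
        < 2 * (x + 1) * (((x + 1) ^ 2 + 4) ^ α / ((x + 1) ^ 2 + 4)) := by
      rw [← mul_div_assoc, ← mul_div_assoc, div_lt_div_iff₀ hD hC]
      linear_combination key3_aux hx1 hdpos hdc
    exact main_ineq hx1 hα0 key1 key2 key3
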